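/- Let t ↦ (ρ(t), φ(t), u(t), v(t)) be a solution of the Hamiltonian system with the underwater-bank Hamiltonian on which v(t) ≡ γ and ℋ ≡ γ/h for constants γ ≠ 0 and h > 0, and set 𝔥 = h². Then for every t the radial variable satisfies the autonomous equation (ρ(t)·ρ̇(t))²·(ρ(t)² + a)² = (ρ(t)² + b)·(ρ(t)²(ρ(t)² + a) − (ρ(t)² + b)·𝔥). -/

import Mathlib

open Real

/-- The underwater-bank Hamiltonian in polar coordinates:
`ℋ(ρ, φ, u, v) = √(u² + v²/ρ²) · √((ρ² + b)/(ρ² + a))`. -/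
noncomputable def bankH (a b ρ φ u v : ℝ) : ℝ :=
  Real.sqrt (u ^ 2 + v ^ 2 / ρ ^ 2) * Real.sqrt ((ρ ^ 2 + b) / (ρ ^ 2 + a))

/-- On a solution of the underwater-bank Hamiltonian system
with `v ≡ γ` and `ℋ ≡ γ/h` (`γ ≠ 0`, `h > 0`, `𝔥 = h²`), the radial variable
satisfies the autonomous equation
`(ρ·ρ̇)²·(ρ² + a)² = (ρ² + b)·(ρ²(ρ² + a) − (ρ² + b)·𝔥)`. -/
theorem bank_radial_autonomous_equation
    (a b : ℝ) (hb : 0 < b) (hab : b < a)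
    (γ h : ℝ) (hγ : γ ≠ 0) (hh : 0 < h)
    (ρ φ u v : ℝ → ℝ)
    (hρpos : ∀ t, 0 < ρ t)
    (hne : ∀ t, (u t, v t) ≠ (0, 0))
    (hρ : ∀ t, HasDerivAt ρ (deriv (fun u' => bankH a b (ρ t) (φ t) u' (v t)) (u t)) t)
    (hφ : ∀ t, HasDerivAt φ (deriv (fun v' => bankH a b (ρ t) (φ t) (u t) v') (v t)) t)
    (hu : ∀ t, HasDerivAt u (-(deriv (fun ρ' => bankH a b ρ' (φ t) (u t) (v t)) (ρ t))) t)
    (hv : ∀ t, HasDerivAt v (-(deriv (fun φ' => bankH a b (ρ t) φ' (u t) (v t)) (φ t))) t)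
    (hvconst : ∀ t, v t = γ)
    (hHconst : ∀ t, bankH a b (ρ t) (φ t) (u t) (v t) = γ / h)
    (𝔥 : ℝ) (h𝔥 : 𝔥 = h ^ 2) :
    ∀ t : ℝ,
      (ρ t * deriv ρ t) ^ 2 * (ρ t ^ 2 + a) ^ 2
        = (ρ t ^ 2 + b) * (ρ t ^ 2 * (ρ t ^ 2 + a) - (ρ t ^ 2 + b) * 𝔥) := by
  intro t
  have hr : (0:ℝ) < ρ t := hρpos t
  set r := ρ t with hrdef
  set U := u t with hUdef
  have hvt : v t = γ := hvconst t
  have hA : (0:ℝ) < r ^ 2 + a := by nlinarith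
  have hB : (0:ℝ) < r ^ 2 + b := by nlinarith
  have hc : (0:ℝ) < U ^ 2 + (v t) ^ 2 / r ^ 2 := by
    have hv0 : v t ≠ 0 := by rw [hvt]; exact hγ
    positivity
  set N := Real.sqrt (U ^ 2 + (v t) ^ 2 / r ^ 2) with hNdef
  set K := Real.sqrt ((r ^ 2 + b) / (r ^ 2 + a)) with hKdef
  have hNpos : 0 < N := Real.sqrt_pos.mpr hc
  have hN2 : N ^ 2 = U ^ 2 + (v t) ^ 2 / r ^ 2 := Real.sq_sqrt hc.le
  have hK2 : K ^ 2 = (r ^ 2 + b) / (r ^ 2 + a) := Real.sq_sqrt (by positivity)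
  -- derivative of the Hamiltonian in u
  have hderiv : deriv (fun u' => bankH a b r (φ t) u' (v t)) U = U / N * K := by
    have h1 : HasDerivAt (fun u' : ℝ => u' ^ 2 + (v t) ^ 2 / r ^ 2) (2 * U) U := by
      simpa using (hasDerivAt_pow 2 U).add_const ((v t) ^ 2 / r ^ 2)
    have h2 := (h1.sqrt (ne_of_gt hc)).mul_const K
    have h3 := h2.deriv
    simp only [bankH]
    rw [h3, hNdef]
    ring
  have hρt : deriv ρ t = U / N * K := by
    rw [(hρ t).deriv, hderiv]
  -- conservation law
  have hcons : (U ^ 2 + (v t) ^ 2 / r ^ 2) * ((r ^ 2 + b) / (r ^ 2 + a)) = (γ / h) ^ 2 := by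
    have := hHconst t
    simp only [bankH] at this
    rw [← hN2, ← hK2, ← mul_pow, this]
  rw [hvt] at hcons
  rw [hρt, h𝔥]
  have hNne : N ≠ 0 := ne_of_gt hNpos
  have hrne : r ≠ 0 := ne_of_gt hr
  have hhne : h ≠ 0 := ne_of_gt hh
  have hAne : (r ^ 2 + a) ≠ 0 := ne_of_gt hA
  have hstep : (r * (U / N * K)) ^ 2 = r ^ 2 * U ^ 2 * ((r ^ 2 + b) / (r ^ 2 + a)) / (U ^ 2 + (v t) ^ 2 / r ^ 2) := by
    rw [show (r * (U / N * K)) ^ 2 = r ^ 2 * U ^ 2 * K ^ 2 / N ^ 2 by ring, hN2, hK2]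
  rw [hstep, hvt]
  have hNe : U ^ 2 + γ ^ 2 / r ^ 2 ≠ 0 := by rw [← hvt]; exact ne_of_gt hc
  field_simp at hcons ⊢
  linear_combination hcons
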